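/- arXiv:2208.05850 — 2 statements merged into one kernel-verified Lean document; each statement's English description precedes it below -/
import Mathlib

section
/- Let M be a path mapping between abstract merge trees T₁ and T₂, let p = v₁…v_k ∈ P(T₁) be contained in M, and let 1 < i < k. Then for any child c of v_i with c ≠ v_{i+1}, no path of the subtree T₁[(c, v_i)] is contained in M. The symmetric statement holds for T₂. -/
/-- An abstract merge tree: a finite unordered rooted tree (given by a parent map)
with positive real edge labels (the label of `v` is the label of the edge `(v, par v)`),
whose root has exactly one child and whose non-root inner nodes have at least two
children.  The degenerate one-vertex tree (the empty tree `⊥`) is also allowed. -/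
structure AMTree where
  V : Type
  [fintypeV : Fintype V]
  [decEqV : DecidableEq V]
  root : V
  par : V → V
  par_root : par root = root
  label : V → ℝ
  label_pos : ∀ v, v ≠ root → 0 < label v
  reach : ∀ v, ∃ k : ℕ, par^[k] v = root
  root_deg : (∀ v, v = root) ∨ (∃! c, c ≠ root ∧ par c = root)
  inner_deg : ∀ v, v ≠ root → (∃ c, c ≠ v ∧ par c = v) →
      ∃ c₁ c₂, c₁ ≠ c₂ ∧ c₁ ≠ v ∧ c₂ ≠ v ∧ par c₁ = v ∧ par c₂ = v

attribute [instance] AMTree.fintypeV AMTree.decEqV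

namespace AMTree

/-- The empty tree `⊥` (a single node, no edges). -/
def bot : AMTree where
  V := Unit
  root := ()
  par _ := ()
  par_root := rfl
  label _ := 0
  label_pos := fun v h => absurd (Subsingleton.elim v ()) h
  reach := fun _ => ⟨0, Subsingleton.elim _ _⟩
  root_deg := Or.inl fun v => Subsingleton.elim v ()
  inner_deg := fun v h _ => absurd (Subsingleton.elim v ()) h

/-- Total persistence: the sum of all edge labels. -/
noncomputable def totalP (T : AMTree) : ℝ :=
  ∑ᶠ v ∈ {v : T.V | v ≠ T.root}, T.label v

/-- Isomorphism of edge-labeled rooted trees. -/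
def Isom (T T' : AMTree) : Prop :=
  ∃ e : T.V ≃ T'.V, e T.root = T'.root ∧ (∀ v, e (T.par v) = T'.par (e v)) ∧
    ∀ v, v ≠ T.root → T.label v = T'.label (e v)

def IsLeaf (T : AMTree) (v : T.V) : Prop := ∀ w, T.par w = v → w = v

/-- `w` is a (weak) descendant of `u`. -/
def Desc (T : AMTree) (u w : T.V) : Prop := ∃ k : ℕ, T.par^[k] w = u

noncomputable def childCount (T : AMTree) (v : T.V) : ℕ :=
  Nat.card {w : T.V // T.par w = v ∧ w ≠ v}

def IsBinary (T : AMTree) : Prop :=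
  ∀ v, v ≠ T.root → ¬ T.IsLeaf v → childCount T v = 2

/-- Relabeling one edge: cost is the absolute difference of the labels. -/
def RelStep (T T' : AMTree) (c : ℝ) : Prop :=
  ∃ e : T.V ≃ T'.V, e T.root = T'.root ∧ (∀ v, e (T.par v) = T'.par (e v)) ∧
    ∃ v₀, v₀ ≠ T.root ∧ (∀ v, v ≠ T.root → v ≠ v₀ → T.label v = T'.label (e v)) ∧
      c = |T.label v₀ - T'.label (e v₀)|

/-- Label-decreasing relabel of one edge. -/
def RelStepDec (T T' : AMTree) (c : ℝ) : Prop :=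
  ∃ e : T.V ≃ T'.V, e T.root = T'.root ∧ (∀ v, e (T.par v) = T'.par (e v)) ∧
    ∃ v₀, v₀ ≠ T.root ∧ (∀ v, v ≠ T.root → v ≠ v₀ → T.label v = T'.label (e v)) ∧
      T'.label (e v₀) ≤ T.label v₀ ∧ c = T.label v₀ - T'.label (e v₀)

/-- Contraction (deletion) of a leaf edge `(u, par u)`: cost is the label of the edge.
If the parent is left with exactly one child, it is removed and its two incident
edges are merged into one whose label is the sum of the two labels. -/
def DelStep (T T' : AMTree) (c : ℝ) : Prop :=
  ∃ u : T.V, u ≠ T.root ∧ T.IsLeaf u ∧ c = T.label u ∧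
    (((2 ≤ Nat.card {w : T.V // T.par w = T.par u ∧ w ≠ T.par u ∧ w ≠ u} ∨ T.par u = T.root) ∧
      ∃ e : T'.V ≃ {w : T.V // w ≠ u},
        (e T'.root).1 = T.root ∧
        (∀ v, (e (T'.par v)).1 = T.par (e v).1) ∧
        (∀ v, v ≠ T'.root → T'.label v = T.label (e v).1))
    ∨
    (∃ s : T.V, s ≠ u ∧ T.par s = T.par u ∧ T.par u ≠ T.root ∧
      (∀ w, T.par w = T.par u → w ≠ T.par u → w = u ∨ w = s) ∧
      ∃ e : T'.V ≃ {w : T.V // w ≠ u ∧ w ≠ T.par u},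
        (e T'.root).1 = T.root ∧
        (∀ v, (e (T'.par v)).1 =
          if (e v).1 = s then T.par (T.par u) else T.par (e v).1) ∧
        (∀ v, v ≠ T'.root → T'.label v =
          if (e v).1 = s then T.label s + T.label (T.par u) else T.label (e v).1)))

/-- General edge contraction (of a leaf edge, with merging, or of an internal edge,
whose children get reattached to the parent): cost is the label of the edge. -/
def ContractStep (T T' : AMTree) (c : ℝ) : Prop :=
  DelStep T T' c ∨
  ∃ u : T.V, u ≠ T.root ∧ ¬ T.IsLeaf u ∧ c = T.label u ∧
    ∃ e : T'.V ≃ {w : T.V // w ≠ u},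
      (e T'.root).1 = T.root ∧
      (∀ v, (e (T'.par v)).1 =
        if T.par (e v).1 = u then T.par u else T.par (e v).1) ∧
      (∀ v, v ≠ T'.root → T'.label v = T.label (e v).1)

/-- One-degree edit operations: relabels, leaf-edge deletions and leaf-edge insertions. -/
def Step1 (T T' : AMTree) (c : ℝ) : Prop :=
  RelStep T T' c ∨ DelStep T T' c ∨ DelStep T' T c

/-- General edit operations: relabels, arbitrary edge contractions and their inverses. -/
def StepE (T T' : AMTree) (c : ℝ) : Prop :=
  RelStep T T' c ∨ ContractStep T T' c ∨ ContractStep T' T c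

/-- Only deletions and label-decreasing relabels. -/
def DecStep (T T' : AMTree) (c : ℝ) : Prop :=
  DelStep T T' c ∨ RelStepDec T T' c

/-- Edit sequences (trees are unordered, so isomorphic trees are identified at no cost);
the total cost is the sum of the costs of the steps. -/
inductive Seq (S : AMTree → AMTree → ℝ → Prop) : AMTree → AMTree → ℝ → Prop
  | refl {T T'} : Isom T T' → Seq S T T' 0
  | step {T₁ T₂ T₃ : AMTree} {c c' : ℝ} : S T₁ T₂ c → Seq S T₂ T₃ c' → Seq S T₁ T₃ (c + c')

/-- Edit sequences recording the list of costs of the individual operations. -/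
inductive SeqL (S : AMTree → AMTree → ℝ → Prop) : AMTree → AMTree → List ℝ → Prop
  | refl {T T'} : Isom T T' → SeqL S T T' []
  | step {T₁ T₂ T₃ : AMTree} {c : ℝ} {cs : List ℝ} :
      S T₁ T₂ c → SeqL S T₂ T₃ cs → SeqL S T₁ T₃ (c :: cs)

/-- The one-degree edit distance. -/
noncomputable def delta1 (T₁ T₂ : AMTree) : ℝ := sInf {c | Seq Step1 T₁ T₂ c}

/-- The general edit distance. -/
noncomputable def deltaE (T₁ T₂ : AMTree) : ℝ := sInf {c | Seq StepE T₁ T₂ c}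

/-- A monotone path in a rooted tree: a nonempty sequence of pairwise distinct
vertices, each being a child of the previous one. -/
structure MPath (T : AMTree) where
  verts : List T.V
  ne : verts ≠ []
  chain : verts.Chain' (fun a b => T.par b = a ∧ b ≠ a)
  nodup : verts.Nodup

def pstart {T : AMTree} (p : MPath T) : T.V := p.verts.head p.ne
def pend {T : AMTree} (p : MPath T) : T.V := p.verts.getLast p.ne

/-- The label (persistence) of a path: the sum of its edge labels. -/
def pathLabel {T : AMTree} (p : MPath T) : ℝ := (p.verts.tail.map T.label).sum

/-- A path mapping between two abstract merge trees. -/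
def IsPathMapping (T₁ T₂ : AMTree) (M : Set (MPath T₁ × MPath T₂)) : Prop :=
  (∀ pq ∈ M, 2 ≤ pq.1.verts.length ∧ 2 ≤ pq.2.verts.length) ∧
  (∀ pq ∈ M, ∀ pq' ∈ M, (pq.1 = pq'.1 ↔ pq.2 = pq'.2)) ∧
  (∀ pq ∈ M, ∀ pq' ∈ M, pq ≠ pq' →
    (∀ a b, a ∈ pq.1.verts → a ∈ pq'.1.verts → b ∈ pq.1.verts → b ∈ pq'.1.verts → a = b) ∧
    (∀ a b, a ∈ pq.2.verts → a ∈ pq'.2.verts → b ∈ pq.2.verts → b ∈ pq'.2.verts → a = b)) ∧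
  (∀ pq ∈ M, (pstart pq.1 = T₁.root ∧ pstart pq.2 = T₂.root) ∨
    ∃ pq' ∈ M, pstart pq.1 = pend pq'.1 ∧ pstart pq.2 = pend pq'.2)

/-- The cost of a path mapping: label differences of mapped paths plus the labels
of all unmapped edges of both trees (an edge is identified with its lower vertex,
and belongs to a path iff that vertex is in the tail of the path). -/
noncomputable def mapCost (T₁ T₂ : AMTree) (M : Set (MPath T₁ × MPath T₂)) : ℝ :=
  (∑ᶠ pq ∈ M, |pathLabel pq.1 - pathLabel pq.2|) +
  (∑ᶠ v ∈ {v : T₁.V | v ≠ T₁.root ∧ ∀ pq ∈ M, v ∉ pq.1.verts.tail}, T₁.label v) +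
  (∑ᶠ v ∈ {v : T₂.V | v ≠ T₂.root ∧ ∀ pq ∈ M, v ∉ pq.2.verts.tail}, T₂.label v)

/-- `SplitAt T u sub rem` : `sub` is (isomorphic to) the subtree `T[(u, par u)]`
rooted in the edge `(u, par u)` and `rem` is (isomorphic to) `T - T[(u, par u)]`,
where if `par u` is left with exactly one child it is removed and its two incident
edges merged, their labels added; if `u` was the root's only child, `rem = ⊥`. -/
def SplitAt (T : AMTree) (u : T.V) (sub rem : AMTree) : Prop :=
  u ≠ T.root ∧
  (∃ e : sub.V ≃ {w : T.V // w = T.par u ∨ T.Desc u w},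
    (e sub.root).1 = T.par u ∧
    (∀ v, v ≠ sub.root → (e (sub.par v)).1 = T.par (e v).1) ∧
    (∀ v, v ≠ sub.root → sub.label v = T.label (e v).1)) ∧
  ((T.par u = T.root ∧ Isom rem bot) ∨
   (2 ≤ Nat.card {w : T.V // T.par w = T.par u ∧ w ≠ T.par u ∧ w ≠ u} ∧
    ∃ e : rem.V ≃ {w : T.V // ¬ T.Desc u w},
      (e rem.root).1 = T.root ∧
      (∀ v, (e (rem.par v)).1 = T.par (e v).1) ∧
      (∀ v, v ≠ rem.root → rem.label v = T.label (e v).1)) ∨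
   (∃ s : T.V, s ≠ u ∧ T.par s = T.par u ∧ T.par u ≠ T.root ∧
     (∀ w, T.par w = T.par u → w ≠ T.par u → w = u ∨ w = s) ∧
     ∃ e : rem.V ≃ {w : T.V // ¬ T.Desc u w ∧ w ≠ T.par u},
       (e rem.root).1 = T.root ∧
       (∀ v, (e (rem.par v)).1 =
         if (e v).1 = s then T.par (T.par u) else T.par (e v).1) ∧
       (∀ v, v ≠ rem.root → rem.label v =
         if (e v).1 = s then T.label s + T.label (T.par u) else T.label (e v).1)))


lemma iterate_root (T : AMTree) (m : ℕ) : T.par^[m] T.root = T.root :=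
  Function.iterate_fixed T.par_root m

lemma eq_root_of_cycle (T : AMTree) {v : T.V} {n : ℕ} (hn : 0 < n)
    (h : T.par^[n] v = v) : v = T.root := by
  obtain ⟨k, hk⟩ := T.reach v
  have h1 : T.par^[n * k] v = v := by
    rw [Function.iterate_mul]; exact Function.iterate_fixed h k
  have hle : k ≤ n * k := Nat.le_mul_of_pos_left k hn
  have h2 : T.par^[n * k] v = T.root := by
    have he : n * k = (n * k - k) + k := by omega
    rw [he, Function.iterate_add_apply, hk, iterate_root]
  rw [h1] at h2; exact h2

lemma getElem_idx_congr {α : Type*} (l : List α) {i j : ℕ} (h : i = j)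
    (hi : i < l.length) : l[i]'hi = l[j]'(h ▸ hi) := by subst h; rfl

lemma chain_step {T : AMTree} (p : MPath T) {j : ℕ} (h : j + 1 < p.verts.length) :
    T.par (p.verts[j + 1]'h) = p.verts[j]'(by omega) ∧
      p.verts[j + 1]'h ≠ p.verts[j]'(by omega) := by
  have := List.isChain_iff_getElem.mp p.chain j (by omega)
  simpa using this

lemma verts_iterate {T : AMTree} (p : MPath T) (j d : ℕ) :
    ∀ h : j + d < p.verts.length,
      T.par^[d] (p.verts[j + d]'h) = p.verts[j]'(by omega) := by
  induction d with
  | zero => intro h; simp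
  | succ d ih =>
      intro h
      have h1 : j + d + 1 < p.verts.length := h
      show T.par^[d + 1] (p.verts[j + d + 1]'h1) = p.verts[j]'(by omega)
      rw [Function.iterate_succ_apply, (chain_step p h1).1]
      exact ih (by omega)

lemma pstart_eq {T : AMTree} (p : MPath T) :
    pstart p = p.verts[0]'(List.length_pos_iff.mpr p.ne) :=
  List.head_eq_getElem _

lemma verts_getElem_pend {T : AMTree} (p : MPath T) {j : ℕ} (h : j < p.verts.length) :
    T.par^[p.verts.length - 1 - j] (pend p) = p.verts[j]'h := by
  have hlen : 0 < p.verts.length := List.length_pos_iff.mpr p.ne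
  have h2 : j + (p.verts.length - 1 - j) < p.verts.length := by omega
  have key := verts_iterate p j (p.verts.length - 1 - j) h2
  have e : pend p = p.verts[j + (p.verts.length - 1 - j)]'h2 := by
    rw [pend, List.getLast_eq_getElem]
    exact getElem_idx_congr _ (by omega) _
  rw [e]; exact key

lemma aux_main (T T' : AMTree) (M : Set (MPath T × MPath T'))
    (cond1 : ∀ pq ∈ M, 2 ≤ pq.1.verts.length)
    (cond3 : ∀ pq ∈ M, ∀ pq' ∈ M, pq ≠ pq' →
      ∀ a b, a ∈ pq.1.verts → a ∈ pq'.1.verts → b ∈ pq.1.verts → b ∈ pq'.1.verts → a = b)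
    (cond4 : ∀ pq ∈ M, pstart pq.1 = T.root ∨ ∃ pq' ∈ M, pstart pq.1 = pend pq'.1) :
    ∀ pq ∈ M, ∀ i : ℕ, 0 < i → ∀ hiv : i < pq.1.verts.length,
      ∀ hi : i + 1 < pq.1.verts.length,
      ∀ c : T.V, T.par c = pq.1.verts[i]'hiv → c ≠ pq.1.verts[i]'hiv →
        c ≠ pq.1.verts[i+1]'hi →
        ∀ p' : MPath T, (∀ w ∈ p'.verts, w = pq.1.verts[i]'hiv ∨ T.Desc c w) →
          ∀ q' : MPath T', (p', q') ∉ M := by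
  intro pq hpq i hi0 hiv hi c hpc hcvi hcvi1 p' hS q' hmem
  have hivm : i - 1 < pq.1.verts.length := by omega
  set p := pq.1 with hp
  set vi := p.verts[i]'hiv with hvi
  set vim := p.verts[i-1]'hivm with hvim
  set vi1 := p.verts[i+1]'hi with hvi1
  -- chain facts
  have hpar_vi : T.par vi = vim ∧ vi ≠ vim := by
    have hc0 := chain_step p (j := i - 1) (by omega)
    have e1 : p.verts[i-1+1]'(by omega) = vi := by
      rw [hvi]; exact getElem_idx_congr _ (by omega) _
    rw [e1] at hc0
    exact ⟨hc0.1, hc0.2⟩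
  have hpar_vi1 : T.par vi1 = vi ∧ vi1 ≠ vi := chain_step p (j := i) hi
  have vi_ne_root : vi ≠ T.root := by
    intro h
    apply hpar_vi.2
    rw [← hpar_vi.1, h, T.par_root]
  have c_ne_root : c ≠ T.root := by
    intro h
    apply hcvi
    rw [h]
    rw [← hpc, h, T.par_root]
  have vi_not_desc : ¬ T.Desc c vi := by
    rintro ⟨m, hm⟩
    apply vi_ne_root
    apply eq_root_of_cycle T (n := m + 1) (by omega)
    rw [Function.iterate_succ_apply', hm, hpc]
  have desc_ne_root : ∀ w, T.Desc c w → w ≠ T.root := by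
    rintro w ⟨m, hm⟩ rfl
    rw [iterate_root] at hm
    exact c_ne_root hm.symm
  have hvi_mem_p : vi ∈ p.verts := by rw [hvi]; exact List.getElem_mem _
  have hvim_mem_p : vim ∈ p.verts := by rw [hvim]; exact List.getElem_mem _
  -- Sublemma A : no mapped pair's first path ends at vi
  have A : ∀ r ∈ M, pend r.1 = vi → False := by
    intro r hr hre
    have hlen : 2 ≤ r.1.verts.length := cond1 r hr
    have h2 : r.1.verts.length - 2 + 1 < r.1.verts.length := by omega
    have e1 : r.1.verts[r.1.verts.length - 2 + 1]'h2 = vi := by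
      rw [getElem_idx_congr r.1.verts
        (show r.1.verts.length - 2 + 1 = r.1.verts.length - 1 by omega) h2]
      rw [← hre, pend, List.getLast_eq_getElem]
    have hc0 := (chain_step r.1 h2).1
    rw [e1, hpar_vi.1] at hc0
    have hvim_mem_r : vim ∈ r.1.verts := by rw [hc0]; exact List.getElem_mem _
    have hvi_mem_r : vi ∈ r.1.verts := by rw [← e1]; exact List.getElem_mem _
    have hrne : r ≠ pq := by
      intro h
      rw [h, ← hp] at hre
      have hl : p.verts.length - 1 < p.verts.length := by omega
      have : p.verts[p.verts.length - 1]'hl = p.verts[i]'hiv := by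
        rw [← hvi, ← hre, pend, List.getLast_eq_getElem]
      have := (p.nodup.getElem_inj_iff).mp this
      omega
    exact hpar_vi.2 (cond3 r hr pq hpq hrne vi vim hvi_mem_r hvi_mem_p hvim_mem_r hvim_mem_p)
  -- Main induction
  have Q : ∀ k : ℕ, ∀ r ∈ M, T.par^[k] (pstart r.1) = c → False := by
    intro k
    induction k using Nat.strong_induction_on with
    | _ k ih =>
    intro r hr hk
    have hw_ne_root : pstart r.1 ≠ T.root := desc_ne_root _ ⟨k, hk⟩
    obtain h | ⟨r', hr', hpe⟩ := cond4 r hr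
    · exact hw_ne_root h
    · have hn2 : 2 ≤ r'.1.verts.length := cond1 r' hr'
      set n := r'.1.verts.length with hn
      have key : ∀ j, ∀ hj : j < n, T.par^[n-1-j] (pstart r.1) = r'.1.verts[j]'hj := by
        intro j hj; rw [hpe]; exact verts_getElem_pend r'.1 hj
      have h0 : (0:ℕ) < n := by omega
      have hps : pstart r'.1 = r'.1.verts[0]'h0 := pstart_eq r'.1
      rcases lt_trichotomy (n-1) (k+1) with hcase | hcase | hcase
      · -- n - 1 ≤ k : recurse
        apply ih (k - (n-1)) (by omega) r' hr'
        have hkey := key 0 h0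
        rw [Nat.sub_zero] at hkey
        rw [hps, ← hkey, ← Function.iterate_add_apply,
          show k - (n-1) + (n-1) = k from by omega]
        exact hk
      · -- n - 1 = k + 1 : r' starts at vi
        have hvi' : pstart r'.1 = vi := by
          rw [hps, ← key 0 h0, show n - 1 - 0 = k + 1 from by omega,
            Function.iterate_succ_apply', hk, hpc]
        obtain h' | ⟨r'', hr'', hpe'⟩ := cond4 r' hr'
        · exact vi_ne_root (hvi' ▸ h')
        · exact A r'' hr'' (by rw [← hpe', hvi'])
      · -- k + 2 ≤ n - 1 : r' contains vi and vim
        have hj1 : n - 1 - (k+1) < n := by omega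
        have hj2 : n - 1 - (k+2) < n := by omega
        have e1 : r'.1.verts[n - 1 - (k+1)]'hj1 = vi := by
          rw [← key _ hj1, show n - 1 - (n - 1 - (k+1)) = k + 1 from by omega,
            Function.iterate_succ_apply', hk, hpc]
        have e2 : r'.1.verts[n - 1 - (k+2)]'hj2 = vim := by
          rw [← key _ hj2, show n - 1 - (n - 1 - (k+2)) = k + 2 from by omega,
            show k + 2 = (k+1) + 1 from rfl,
            Function.iterate_succ_apply', Function.iterate_succ_apply', hk, hpc,
            hpar_vi.1]
        have hmem_vi : vi ∈ r'.1.verts := by rw [← e1]; exact List.getElem_mem _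
        have hmem_vim : vim ∈ r'.1.verts := by rw [← e2]; exact List.getElem_mem _
        have cyc : ∀ a b : ℕ, a < b → T.par^[a] (pstart r.1) = vi →
            T.par^[b] (pstart r.1) = vi → False := by
          intro a b hab h1 h2
          apply vi_ne_root
          apply eq_root_of_cycle T (n := b - a) (by omega)
          conv_lhs => rw [← h1]
          rw [← Function.iterate_add_apply, show b - a + a = b from by omega]
          exact h2
        have hrne : r' ≠ pq := by
          intro h
          rw [h, ← hp] at hpe
          have hm1 : T.par^[p.verts.length - 1 - (i+1)] (pstart r.1) = vi1 := by
            rw [hpe, hvi1]; exact verts_getElem_pend p hi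
          have hm2 : T.par^[p.verts.length - 1 - i] (pstart r.1) = vi := by
            rw [hpe, hvi]; exact verts_getElem_pend p hiv
          have hk1 : T.par^[k+1] (pstart r.1) = vi := by
            rw [Function.iterate_succ_apply', hk, hpc]
          by_cases hexp : p.verts.length - 1 - i = k + 1
          · apply hcvi1
            rw [← hk, ← hm1, show p.verts.length - 1 - (i+1) = k from by omega]
          · rcases Nat.lt_or_ge (p.verts.length - 1 - i) (k+1) with hab | hab
            · exact cyc _ _ hab hm2 hk1
            · exact cyc _ _ (by omega) hk1 hm2
        exact hpar_vi.2
          (cond3 r' hr' pq hpq hrne vi vim hmem_vi hvi_mem_p hmem_vim hvim_mem_p)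
  -- Conclusion
  rcases hS (pstart p') (List.head_mem p'.ne) with h | ⟨k, hk⟩
  · obtain h' | ⟨r, hr, hpe⟩ := cond4 (p', q') hmem
    · exact vi_ne_root (h ▸ h')
    · exact A r hr (by rw [← hpe]; exact h)
  · exact Q k (p', q') hmem hk

end AMTree

open AMTree in
/-- if `p = v₁…v_k` is contained in a path mapping `M` and `c ≠ v_{i+1}`
is a child of an interior vertex `v_i` (`1 < i < k`), then no path of the subtree
`T₁[(c, v_i)]` is contained in `M`; symmetrically for `T₂`. -/
theorem subtree_off_mapped_path_not_contained (T₁ T₂ : AMTree)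
    (M : Set (MPath T₁ × MPath T₂)) (hM : IsPathMapping T₁ T₂ M) :
    (∀ pq ∈ M, ∀ i : ℕ, 0 < i → ∀ hi : i + 1 < pq.1.verts.length,
      ∀ c : T₁.V, T₁.par c = pq.1.verts[i]'(by omega) → c ≠ pq.1.verts[i]'(by omega) →
        c ≠ pq.1.verts[i+1]'hi →
        ∀ p' : MPath T₁, (∀ w ∈ p'.verts, w = pq.1.verts[i]'(by omega) ∨ T₁.Desc c w) →
          ∀ q' : MPath T₂, (p', q') ∉ M) ∧
    (∀ pq ∈ M, ∀ i : ℕ, 0 < i → ∀ hi : i + 1 < pq.2.verts.length,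
      ∀ c : T₂.V, T₂.par c = pq.2.verts[i]'(by omega) → c ≠ pq.2.verts[i]'(by omega) →
        c ≠ pq.2.verts[i+1]'hi →
        ∀ q' : MPath T₂, (∀ w ∈ q'.verts, w = pq.2.verts[i]'(by omega) ∨ T₂.Desc c w) →
          ∀ p' : MPath T₁, (p', q') ∉ M) := by

  constructor
  · intro pq hpq i hi0 hi c h1 h2 h3 p' hS q'
    exact aux_main T₁ T₂ M (fun pq h => (hM.1 pq h).1)
      (fun pq h pq' h' hne => (hM.2.2.1 pq h pq' h' hne).1)
      (fun pq h => by
        rcases hM.2.2.2 pq h with ⟨ha, _⟩ | ⟨pq', hm, ha, _⟩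
        · exact Or.inl ha
        · exact Or.inr ⟨pq', hm, ha⟩)
      pq hpq i hi0 (by omega) hi c h1 h2 h3 p' hS q'
  · intro pq hpq i hi0 hi c h1 h2 h3 q' hS p'
    set M' : Set (MPath T₂ × MPath T₁) := {x | (x.2, x.1) ∈ M} with hM'
    have hmem' : ((pq.2, pq.1) : MPath T₂ × MPath T₁) ∈ M' := by
      show ((pq.2, pq.1).2, (pq.2, pq.1).1) ∈ M
      simpa using hpq
    have c1 : ∀ x ∈ M', 2 ≤ x.1.verts.length := fun x h => (hM.1 (x.2, x.1) h).2
    have c3 : ∀ x ∈ M', ∀ x' ∈ M', x ≠ x' →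
        ∀ a b, a ∈ x.1.verts → a ∈ x'.1.verts → b ∈ x.1.verts → b ∈ x'.1.verts → a = b := by
      intro x hx x' hx' hne
      have hne2 : ((x.2, x.1) : MPath T₁ × MPath T₂) ≠ (x'.2, x'.1) := by
        intro he
        apply hne
        obtain ⟨a, b⟩ := x
        obtain ⟨a', b'⟩ := x'
        simp only [Prod.mk.injEq] at he
        simp [he.1, he.2]
      exact (hM.2.2.1 (x.2, x.1) hx (x'.2, x'.1) hx' hne2).2
    have c4 : ∀ x ∈ M', pstart x.1 = T₂.root ∨ ∃ x' ∈ M', pstart x.1 = pend x'.1 := by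
      intro x hx
      rcases hM.2.2.2 (x.2, x.1) hx with ⟨_, hb⟩ | ⟨pq', hm, _, hb⟩
      · exact Or.inl hb
      · refine Or.inr ⟨(pq'.2, pq'.1), ?_, hb⟩
        show ((pq'.2, pq'.1).2, (pq'.2, pq'.1).1) ∈ M
        simpa using hm
    exact aux_main T₂ T₁ M' c1 c3 c4 (pq.2, pq.1) hmem' i hi0 (Nat.lt_of_succ_lt hi) hi c h1 h2 h3
      q' hS p'
end

section
/- Contracting a leaf edge of an abstract merge tree yields an abstract merge tree: if T is an abstract merge tree with at least two edges, and (c,p) is an edge with c a leaf, then the result T' of the one-degree contraction of (c,p) is an abstract merge tree, where if p had exactly two children its two remaining incident edges are merged into one with summed (hence positive) label. -/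
namespace AMTree

lemma par_ne_self {T : AMTree} {v : T.V} (hv : v ≠ T.root) : T.par v ≠ v := by
  intro h
  obtain ⟨k, hk⟩ := T.reach v
  exact hv (Function.iterate_fixed h k ▸ hk)

lemma no_two_cycle {T : AMTree} {a b : T.V} (ha : a ≠ T.root)
    (hab : T.par a = b) (hba : T.par b = a) : False := by
  obtain ⟨k, hk⟩ := T.reach a
  have hb : b ≠ T.root := by
    intro h; subst h; rw [T.par_root] at hba; exact ha hba.symm
  have key : ∀ k, T.par^[k] a = a ∨ T.par^[k] a = b := by
    intro k
    induction k with
    | zero => exact Or.inl rfl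
    | succ n ih =>
      rw [Function.iterate_succ_apply']
      rcases ih with h | h
      · rw [h, hab]; exact Or.inr rfl
      · rw [h, hba]; exact Or.inl rfl
  rcases key k with h | h
  · exact ha (h ▸ hk)
  · exact hb (h ▸ hk)

lemma parent_of_leaf_ne_root {T : AMTree} (hT : 2 ≤ Nat.card {v : T.V // v ≠ T.root})
    {u : T.V} (hu : u ≠ T.root) (hleaf : T.IsLeaf u) : T.par u ≠ T.root := by
  intro hp
  rcases T.root_deg with hall | ⟨c, ⟨hc1, hc2⟩, huniq⟩
  · exact hu (hall u)
  · have hcu : c = u := (huniq u ⟨hu, hp⟩).symm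
    have key : ∀ k v, T.par^[k] v = T.root → v = T.root ∨ v = u := by
      intro k
      induction k with
      | zero => intro v h; exact Or.inl h
      | succ n ih =>
        intro v h
        rw [Function.iterate_succ_apply] at h
        rcases ih (T.par v) h with h1 | h1
        · by_cases hv : v = T.root
          · exact Or.inl hv
          · exact Or.inr ((huniq v ⟨hv, h1⟩).trans hcu)
        · exact Or.inr (hleaf v h1)
    have hsub : Subsingleton {v : T.V // v ≠ T.root} := by
      constructor
      rintro ⟨a, ha⟩ ⟨b, hb⟩
      obtain ⟨k, hk⟩ := T.reach a
      obtain ⟨m, hm⟩ := T.reach b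
      have ha' := (key k a hk).resolve_left ha
      have hb' := (key m b hm).resolve_left hb
      simp [ha', hb']
    haveI := hsub
    have := Nat.card_of_subsingleton (⟨u, hu⟩ : {v : T.V // v ≠ T.root})
    omega

section ContractA

variable (T : AMTree) (u : T.V)

def parA (hleaf : T.IsLeaf u) (v : {w : T.V // w ≠ u}) : {w : T.V // w ≠ u} :=
  ⟨T.par v.1, fun h => v.2 (hleaf v.1 h)⟩

lemma parA_iter (hleaf : T.IsLeaf u) :
    ∀ k (x : {w : T.V // w ≠ u}), ((parA T u hleaf)^[k] x).1 = T.par^[k] x.1 := by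
  intro k
  induction k with
  | zero => intro x; rfl
  | succ n ih =>
    intro x
    rw [Function.iterate_succ_apply, Function.iterate_succ_apply]
    exact ih _

def contractA (hu : u ≠ T.root) (hleaf : T.IsLeaf u) (hp : T.par u ≠ T.root)
    (h2 : ∃ c₁ c₂ : T.V, c₁ ≠ c₂ ∧ T.par c₁ = T.par u ∧ T.par c₂ = T.par u ∧
      c₁ ≠ T.par u ∧ c₂ ≠ T.par u ∧ c₁ ≠ u ∧ c₂ ≠ u) : AMTree where
  V := {w : T.V // w ≠ u}
  root := ⟨T.root, Ne.symm hu⟩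
  par := parA T u hleaf
  par_root := Subtype.ext T.par_root
  label v := T.label v.1
  label_pos v hv := T.label_pos v.1 (fun h => hv (Subtype.ext h))
  reach v := by
    obtain ⟨k, hk⟩ := T.reach v.1
    exact ⟨k, Subtype.ext (by rw [parA_iter]; exact hk)⟩
  root_deg := by
    rcases T.root_deg with hall | ⟨c, ⟨hc1, hc2⟩, huniq⟩
    · exact absurd (hall u) hu
    · refine Or.inr ⟨⟨c, fun h => hp (h ▸ hc2)⟩, ⟨fun h => hc1 (congrArg Subtype.val h),
        Subtype.ext hc2⟩, ?_⟩
      rintro ⟨w, hw⟩ ⟨hw1, hw2⟩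
      exact Subtype.ext (huniq w ⟨fun h => hw1 (Subtype.ext h), congrArg Subtype.val hw2⟩)
  inner_deg := by
    rintro ⟨v, hv⟩ hvr ⟨⟨c, hc⟩, hc1, hc2⟩
    have hvr' : v ≠ T.root := fun h => hvr (Subtype.ext h)
    by_cases hvp : v = T.par u
    · obtain ⟨c₁, c₂, h12, hp1, hp2, hn1, hn2, hu1, hu2⟩ := h2
      exact ⟨⟨c₁, hu1⟩, ⟨c₂, hu2⟩, fun h => h12 (congrArg Subtype.val h),
        fun h => hn1 ((congrArg Subtype.val h).trans hvp),
        fun h => hn2 ((congrArg Subtype.val h).trans hvp),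
        Subtype.ext (hp1.trans hvp.symm), Subtype.ext (hp2.trans hvp.symm)⟩
    · obtain ⟨c₁, c₂, h12, hn1, hn2, hp1, hp2⟩ := T.inner_deg v hvr'
        ⟨c, fun h => hc1 (Subtype.ext h), congrArg Subtype.val hc2⟩
      have hu1 : c₁ ≠ u := fun h => hvp (h ▸ hp1).symm
      have hu2 : c₂ ≠ u := fun h => hvp (h ▸ hp2).symm
      exact ⟨⟨c₁, hu1⟩, ⟨c₂, hu2⟩, fun h => h12 (congrArg Subtype.val h),
        fun h => hn1 (congrArg Subtype.val h), fun h => hn2 (congrArg Subtype.val h),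
        Subtype.ext hp1, Subtype.ext hp2⟩

end ContractA

section ContractB

variable (T : AMTree) (u s : T.V)

def VB : Type := {w : T.V // w ≠ u ∧ w ≠ T.par u}

instance : Fintype (VB T u) := by unfold VB; infer_instance
instance : DecidableEq (VB T u) := by unfold VB; infer_instance

lemma pp_ne_u (hu : u ≠ T.root) (hleaf : T.IsLeaf u) : T.par (T.par u) ≠ u :=
  fun h => par_ne_self hu (hleaf _ h)

lemma pp_ne_p (hp : T.par u ≠ T.root) : T.par (T.par u) ≠ T.par u := par_ne_self hp

lemma s_ne_p (hp : T.par u ≠ T.root) (hs : T.par s = T.par u) : s ≠ T.par u :=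
  fun h => par_ne_self hp (h ▸ hs)

lemma s_ne_root (hp : T.par u ≠ T.root) (hs : T.par s = T.par u) : s ≠ T.root :=
  fun h => hp (by rw [← hs, h, T.par_root])

def parB (hu : u ≠ T.root) (hleaf : T.IsLeaf u) (hp : T.par u ≠ T.root)
    (honly : ∀ w, T.par w = T.par u → w ≠ T.par u → w = u ∨ w = s)
    (v : VB T u) : VB T u :=
  if hvs : v.1 = s then ⟨T.par (T.par u), pp_ne_u T u hu hleaf, pp_ne_p T u hp⟩
  else ⟨T.par v.1, fun h => v.2.1 (hleaf _ h), fun h => by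
    rcases honly v.1 h v.2.2 with h1 | h1
    · exact v.2.1 h1
    · exact hvs h1⟩

variable (hu : u ≠ T.root) (hleaf : T.IsLeaf u) (hp : T.par u ≠ T.root)
  (hsu : s ≠ u)
  (honly : ∀ w, T.par w = T.par u → w ≠ T.par u → w = u ∨ w = s)

lemma parB_val (v : VB T u) :
    (parB T u s hu hleaf hp honly v).1 =
      if v.1 = s then T.par (T.par u) else T.par v.1 := by
  unfold parB; split <;> simp_all

def rootB : VB T u := ⟨T.root, Ne.symm hu, Ne.symm hp⟩

lemma parB_root (hs : T.par s = T.par u) : parB T u s hu hleaf hp honly (rootB T u hu hp) = rootB T u hu hp := by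
  apply Subtype.ext
  rw [parB_val]
  have hr : (rootB T u hu hp).1 = T.root := rfl
  rw [hr, if_neg (Ne.symm (s_ne_root T u s hp hs))]
  exact T.par_root

lemma reachB (hs : T.par s = T.par u) : ∀ k, ∀ v : VB T u, T.par^[k] v.1 = T.root →
    ∃ m, (parB T u s hu hleaf hp honly)^[m] v = rootB T u hu hp := by
  intro k
  induction k using Nat.strong_induction_on with
  | _ k ih =>
    intro v hv
    by_cases hvr : v.1 = T.root
    · exact ⟨0, Subtype.ext hvr⟩
    · cases k with
      | zero => exact absurd hv hvr
      | succ n =>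
        rw [Function.iterate_succ_apply] at hv
        by_cases hvs : v.1 = s
        · have hpn : T.par^[n] (T.par u) = T.root := by rw [← hs]; rw [hvs] at hv; exact hv
          cases n with
          | zero => exact absurd hpn hp
          | succ m =>
            rw [Function.iterate_succ_apply] at hpn
            obtain ⟨m', hm'⟩ := ih m (by omega)
              ⟨T.par (T.par u), pp_ne_u T u hu hleaf, pp_ne_p T u hp⟩ hpn
            refine ⟨m' + 1, ?_⟩
            rw [Function.iterate_succ_apply]
            have heq : parB T u s hu hleaf hp honly v =
                ⟨T.par (T.par u), pp_ne_u T u hu hleaf, pp_ne_p T u hp⟩ :=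
              Subtype.ext (by rw [parB_val, if_pos hvs])
            rw [heq]; exact hm'
        · obtain ⟨m', hm'⟩ := ih n (by omega)
            ⟨T.par v.1, fun h => v.2.1 (hleaf _ h), fun h => by
              rcases honly v.1 h v.2.2 with h1 | h1
              · exact v.2.1 h1
              · exact hvs h1⟩ hv
          refine ⟨m' + 1, ?_⟩
          rw [Function.iterate_succ_apply]
          have heq : parB T u s hu hleaf hp honly v =
              ⟨T.par v.1, fun h => v.2.1 (hleaf _ h), fun h => by
                rcases honly v.1 h v.2.2 with h1 | h1
                · exact v.2.1 h1
                · exact hvs h1⟩ :=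
            Subtype.ext (by rw [parB_val, if_neg hvs])
          rw [heq]; exact hm'

def contractB (hs : T.par s = T.par u) : AMTree where
  V := VB T u
  root := rootB T u hu hp
  par := parB T u s hu hleaf hp honly
  par_root := parB_root T u s hu hleaf hp honly hs
  label v := if v.1 = s then T.label s + T.label (T.par u) else T.label v.1
  label_pos := by
    rintro ⟨v, hv1, hv2⟩ hvr
    have hvr' : v ≠ T.root := fun h => hvr (Subtype.ext h)
    show 0 < if v = s then T.label s + T.label (T.par u) else T.label v
    by_cases hvs : v = s
    · rw [if_pos hvs]
      have h1 := T.label_pos s (s_ne_root T u s hp hs)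
      have h2 := T.label_pos (T.par u) hp
      linarith
    · rw [if_neg hvs]
      exact T.label_pos v hvr'
  reach v := by
    obtain ⟨k, hk⟩ := T.reach v.1
    exact reachB T u s hu hleaf hp honly hs k v hk
  root_deg := by
    rcases T.root_deg with hall | ⟨c, ⟨hc1, hc2⟩, huniq⟩
    · exact absurd (hall u) hu
    · refine Or.inr ?_
      by_cases hcp : c = T.par u
      · refine ⟨⟨s, hsu, s_ne_p T u s hp hs⟩,
          ⟨fun h => s_ne_root T u s hp hs (congrArg Subtype.val h), ?_⟩, ?_⟩
        · apply Subtype.ext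
          erw [parB_val, if_pos rfl]
          show T.par (T.par u) = T.root
          rw [← hcp]
          exact hc2
        · rintro ⟨w, hw1, hw2⟩ ⟨hq1, hq2⟩
          by_cases hws : w = s
          · exact Subtype.ext hws
          · exfalso
            have hq2' := congrArg Subtype.val hq2
            erw [parB_val, if_neg hws] at hq2'
            have hwr : w ≠ T.root := fun h => hq1 (Subtype.ext h)
            exact hw2 ((huniq w ⟨hwr, hq2'⟩).trans hcp)
      · have hcu : c ≠ u := fun h => hp (h ▸ hc2)
        refine ⟨⟨c, hcu, hcp⟩, ⟨fun h => hc1 (congrArg Subtype.val h), ?_⟩, ?_⟩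
        · apply Subtype.ext
          have hcs : c ≠ s := fun h => hp (by rw [← hs, ← h]; exact hc2)
          erw [parB_val, if_neg hcs]
          exact hc2
        · rintro ⟨w, hw1, hw2⟩ ⟨hq1, hq2⟩
          apply Subtype.ext
          have hq2' := congrArg Subtype.val hq2
          erw [parB_val] at hq2'
          by_cases hws : w = s
          · rw [if_pos hws] at hq2'
            exact absurd (huniq (T.par u) ⟨hp, hq2'⟩).symm hcp
          · rw [if_neg hws] at hq2'
            exact huniq w ⟨fun h => hq1 (Subtype.ext h), hq2'⟩
  inner_deg := by
    rintro ⟨v, hv1, hv2⟩ hvr ⟨⟨c, hcmem⟩, hcne, hcpar⟩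
    have hvr' : v ≠ T.root := fun h => hvr (Subtype.ext h)
    have hchild : ∃ c', c' ≠ v ∧ T.par c' = v := by
      have hcp' := congrArg Subtype.val hcpar
      erw [parB_val] at hcp'
      by_cases hcs : c = s
      · rw [if_pos hcs] at hcp'
        exact ⟨T.par u, Ne.symm hv2, hcp'⟩
      · rw [if_neg hcs] at hcp'
        exact ⟨c, fun h => hcne (Subtype.ext h), hcp'⟩
    obtain ⟨c₁, c₂, h12, hn1, hn2, hp1, hp2⟩ := T.inner_deg v hvr' hchild
    have key : ∀ w, T.par w = v → w ≠ v →
        ∃ w' : VB T u, parB T u s hu hleaf hp honly w' = ⟨v, hv1, hv2⟩ ∧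
          w' ≠ (⟨v, hv1, hv2⟩ : VB T u) ∧ w'.1 = (if w = T.par u then s else w) := by
      intro w hw hwv
      have hwu : w ≠ u := fun h => hv2 (by rw [← hw, h])
      by_cases hwp : w = T.par u
      · have hppv : T.par (T.par u) = v := by rw [← hwp]; exact hw
        have hsv : s ≠ v := fun h =>
          no_two_cycle (s_ne_root T u s hp hs) hs (hppv.trans h.symm)
        refine ⟨⟨s, hsu, s_ne_p T u s hp hs⟩, ?_,
          fun h => hsv (congrArg Subtype.val h), by rw [if_pos hwp]⟩
        apply Subtype.ext
        erw [parB_val, if_pos rfl]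
        exact hppv
      · have hws : w ≠ s := fun h => hv2 (by rw [← hw, h, hs])
        refine ⟨⟨w, hwu, hwp⟩, ?_,
          fun h => hwv (congrArg Subtype.val h), by rw [if_neg hwp]⟩
        apply Subtype.ext
        erw [parB_val, if_neg hws]
        exact hw
    obtain ⟨w₁, hw1p, hw1n, hw1v⟩ := key c₁ hp1 hn1
    obtain ⟨w₂, hw2p, hw2n, hw2v⟩ := key c₂ hp2 hn2
    refine ⟨w₁, w₂, ?_, hw1n, hw2n, hw1p, hw2p⟩
    intro h
    have hval : w₁.1 = w₂.1 := congrArg Subtype.val h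
    rw [hw1v, hw2v] at hval
    by_cases h1 : c₁ = T.par u <;> by_cases h2 : c₂ = T.par u
    · exact h12 (h1.trans h2.symm)
    · rw [if_pos h1, if_neg h2] at hval
      exact hv2 (by rw [← hp2, ← hval, hs])
    · rw [if_neg h1, if_pos h2] at hval
      exact hv2 (by rw [← hp1, hval, hs])
    · rw [if_neg h1, if_neg h2] at hval
      exact h12 hval

end ContractB

end AMTree

open AMTree in
/-- contracting a leaf edge of an abstract merge tree with at least two
edges yields an abstract merge tree (with the merged edge label being the sum, hence
positive): the contracted tree exists as an abstract merge tree. -/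
theorem leaf_contraction_is_AMT (T : AMTree)
    (hT : 2 ≤ Nat.card {v : T.V // v ≠ T.root})
    (u : T.V) (hu : u ≠ T.root) (hleaf : T.IsLeaf u) :
    ∃ T' : AMTree, DelStep T T' (T.label u) := by
  classical
  have hp : T.par u ≠ T.root := parent_of_leaf_ne_root hT hu hleaf
  have hup : u ≠ T.par u := fun h => par_ne_self hu h.symm
  by_cases hA : ∃ w₁ w₂ : T.V, w₁ ≠ w₂ ∧ T.par w₁ = T.par u ∧ w₁ ≠ T.par u ∧ w₁ ≠ u ∧
      T.par w₂ = T.par u ∧ w₂ ≠ T.par u ∧ w₂ ≠ u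
  · obtain ⟨w₁, w₂, hww, q1, q2, q3, q4, q5, q6⟩ := hA
    refine ⟨contractA T u hu hleaf hp ⟨w₁, w₂, hww, q1, q4, q2, q5, q3, q6⟩,
      u, hu, hleaf, rfl, Or.inl ⟨Or.inl ?_, Equiv.refl _, rfl, fun v => rfl, fun v _ => rfl⟩⟩
    · have : Nontrivial {w : T.V // T.par w = T.par u ∧ w ≠ T.par u ∧ w ≠ u} :=
        ⟨⟨⟨w₁, q1, q2, q3⟩, ⟨w₂, q4, q5, q6⟩, fun h => hww (congrArg Subtype.val h)⟩⟩
      exact Finite.one_lt_card_iff_nontrivial.mpr this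
  · -- exactly one remaining sibling
    obtain ⟨c₁, c₂, h12, hn1, hn2, hq1, hq2⟩ := T.inner_deg (T.par u) hp ⟨u, hup, rfl⟩
    obtain ⟨s, hsu, hs, hsp⟩ : ∃ s, s ≠ u ∧ T.par s = T.par u ∧ s ≠ T.par u := by
      by_cases h1 : c₁ = u
      · exact ⟨c₂, fun h => h12 (h1.trans h.symm), hq2, hn2⟩
      · exact ⟨c₁, h1, hq1, hn1⟩
    have honly : ∀ w, T.par w = T.par u → w ≠ T.par u → w = u ∨ w = s := by
      intro w hw hwp
      by_contra hcon
      push_neg at hcon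
      exact hA ⟨w, s, hcon.2, hw, hwp, hcon.1, hs, hsp, hsu⟩
    refine ⟨contractB T u s hu hleaf hp hsu honly hs, u, hu, hleaf, rfl,
      Or.inr ⟨s, hsu, hs, hp, honly, Equiv.refl _, rfl, ?_, ?_⟩⟩
    · intro v
      exact parB_val T u s hu hleaf hp honly v
    · intro v _
      show (if v.1 = s then T.label s + T.label (T.par u) else T.label v.1) = _
      rfl
end
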